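/- Let A be a nonzero m×n complex matrix and B a nonzero n×m complex matrix, let ‖·‖₁ be a unitarily invariant norm on complex m×n matrices and ‖·‖₂ a unitarily invariant norm on complex n×m matrices, and let H₁ be an m×m Hermitian matrix and H₂ an n×n Hermitian matrix. Then the function t ↦ log(‖e^{tH₁} A e^{-tH₂}‖₁) + log(‖e^{tH₂} B e^{-tH₁}‖₂) is convex on ℝ; that is, the log of the cross condition number κ(XAY⁻¹, YBX⁻¹) = ‖XAY⁻¹‖₁·‖YBX⁻¹‖₂ is geodesically convex. -/

import Mathlib

open Matrix

/-- The matrix exponential of a square complex matrix. -/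
noncomputable def mexp {k : ℕ} (A : Matrix (Fin k) (Fin k) ℂ) : Matrix (Fin k) (Fin k) ℂ :=
  NormedSpace.exp A

/-- `N` is a unitarily invariant matrix norm on `m × n` complex matrices:
it is a norm and satisfies `N (U * A * V) = N A` for all unitary `U`, `V`. -/
structure IsUnitarilyInvariantNorm (m n : ℕ) (N : Matrix (Fin m) (Fin n) ℂ → ℝ) : Prop where
  eq_zero_iff : ∀ A, N A = 0 ↔ A = 0
  smul : ∀ (c : ℂ) (A), N (c • A) = ‖c‖ * N A
  triangle : ∀ A B, N (A + B) ≤ N A + N B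
  unitary_inv : ∀ (U : Matrix (Fin m) (Fin m) ℂ) (V : Matrix (Fin n) (Fin n) ℂ),
    U ∈ Matrix.unitaryGroup (Fin m) ℂ → V ∈ Matrix.unitaryGroup (Fin n) ℂ →
    ∀ A, N (U * A * V) = N A

namespace LogCCN

/-- A type synonym for matrices, used to carry a custom norm. -/
def MatN (m n : ℕ) : Type := Matrix (Fin m) (Fin n) ℂ

variable {m n : ℕ} {N : Matrix (Fin m) (Fin n) ℂ → ℝ}

lemma N_zero (hN : IsUnitarilyInvariantNorm m n N) : N 0 = 0 :=
  (hN.eq_zero_iff 0).mpr rfl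

lemma N_neg (hN : IsUnitarilyInvariantNorm m n N) (X : Matrix (Fin m) (Fin n) ℂ) :
    N (-X) = N X := by
  have h := hN.smul (-1) X
  simpa using h

lemma N_nonneg (hN : IsUnitarilyInvariantNorm m n N) (X : Matrix (Fin m) (Fin n) ℂ) :
    0 ≤ N X := by
  have h := hN.triangle X (-X)
  rw [add_neg_cancel, N_zero hN, N_neg hN] at h
  linarith

lemma N_pos (hN : IsUnitarilyInvariantNorm m n N) {X : Matrix (Fin m) (Fin n) ℂ}
    (hX : X ≠ 0) : 0 < N X :=
  (N_nonneg hN X).lt_of_ne (fun h => hX ((hN.eq_zero_iff X).mp h.symm))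

lemma mexp_add {k : ℕ} (M : Matrix (Fin k) (Fin k) ℂ) (w z : ℂ) :
    mexp ((w + z) • M) = mexp (w • M) * mexp (z • M) := by
  simp only [mexp, add_smul]
  exact Matrix.exp_add_of_commute _ _ (((Commute.refl M).smul_left w).smul_right z)

lemma mexp_zero {k : ℕ} (M : Matrix (Fin k) (Fin k) ℂ) : mexp ((0 : ℂ) • M) = 1 := by
  simp only [mexp, zero_smul, NormedSpace.exp_zero]

lemma mexp_mul_mexp_neg {k : ℕ} (M : Matrix (Fin k) (Fin k) ℂ) (w : ℂ) :
    mexp (w • M) * mexp ((-w) • M) = 1 := by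
  rw [← mexp_add, add_neg_cancel, mexp_zero]

/-- The exponential of a skew-Hermitian multiple of a Hermitian matrix is unitary. -/
lemma mexp_unitary {k : ℕ} {M : Matrix (Fin k) (Fin k) ℂ} (hM : M.IsHermitian) (c : ℂ)
    (hc : star c = -c) : mexp (c • M) ∈ Matrix.unitaryGroup (Fin k) ℂ := by
  have hstar : star (mexp (c • M)) = mexp ((-c) • M) := by
    show (mexp (c • M))ᴴ = mexp ((-c) • M)
    rw [mexp, mexp, ← Matrix.exp_conjTranspose]
    congr 1
    rw [Matrix.conjTranspose_smul, hM.eq, hc]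
  rw [Matrix.mem_unitaryGroup_iff, hstar, mexp_mul_mexp_neg]

/-- Conjugation shift identity for the sandwiched exponential family. -/
lemma conj_shift {k l : ℕ} (H : Matrix (Fin k) (Fin k) ℂ) (K : Matrix (Fin l) (Fin l) ℂ)
    (A : Matrix (Fin k) (Fin l) ℂ) (w z : ℂ) :
    mexp (z • H) * (mexp (w • H) * A * mexp ((-w) • K)) * mexp ((-z) • K) =
      mexp ((w + z) • H) * A * mexp ((-(w + z)) • K) := by
  have h1 : mexp ((w + z) • H) = mexp (z • H) * mexp (w • H) := by
    rw [← mexp_add]; ring_nf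
  have h2 : mexp ((-(w + z)) • K) = mexp ((-w) • K) * mexp ((-z) • K) := by
    rw [← mexp_add]; ring_nf
  rw [h1, h2]
  simp only [Matrix.mul_assoc]

/-- `N` of the sandwiched exponential family only depends on the real part. -/
lemma norm_line_invariant (hN : IsUnitarilyInvariantNorm m n N)
    {H : Matrix (Fin m) (Fin m) ℂ} {K : Matrix (Fin n) (Fin n) ℂ}
    (hH : H.IsHermitian) (hK : K.IsHermitian) (A : Matrix (Fin m) (Fin n) ℂ) (z : ℂ) :
    N (mexp (z • H) * A * mexp ((-z) • K)) =
      N (mexp ((z.re : ℂ) • H) * A * mexp ((-(z.re : ℂ)) • K)) := by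
  set c : ℂ := (z.im : ℂ) * Complex.I with hcdef
  have hc : star c = -c := by
    simp [hcdef, Complex.star_def, Complex.conj_ofReal, mul_comm]
  have hz : z = (z.re : ℂ) + c := (Complex.re_add_im z).symm
  have hshift := conj_shift H K A (z.re : ℂ) c
  calc N (mexp (z • H) * A * mexp ((-z) • K))
      = N (mexp (c • H) * (mexp ((z.re : ℂ) • H) * A * mexp ((-(z.re : ℂ)) • K)) *
          mexp ((-c) • K)) := by rw [hshift, ← hz]
    _ = N (mexp ((z.re : ℂ) • H) * A * mexp ((-(z.re : ℂ)) • K)) := by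
        refine hN.unitary_inv _ _ (mexp_unitary hH c hc) (mexp_unitary hK (-c) ?_) _
        rw [star_neg, hc, neg_neg]

/-- The Hadamard three-lines step: interpolation inequality on `[0,1]`. -/
lemma key01 (hN : IsUnitarilyInvariantNorm m n N)
    {H : Matrix (Fin m) (Fin m) ℂ} {K : Matrix (Fin n) (Fin n) ℂ}
    (hH : H.IsHermitian) (hK : K.IsHermitian) (A : Matrix (Fin m) (Fin n) ℂ)
    {x : ℝ} (hx : x ∈ Set.Icc (0 : ℝ) 1) :
    N (mexp ((x : ℂ) • H) * A * mexp ((-(x : ℂ)) • K)) ≤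
      N A ^ (1 - x) * N (mexp ((1 : ℂ) • H) * A * mexp ((-(1 : ℂ)) • K)) ^ x := by
  classical
  letI : NormedRing (Matrix (Fin m) (Fin m) ℂ) := Matrix.linftyOpNormedRing
  letI : NormedAlgebra ℂ (Matrix (Fin m) (Fin m) ℂ) := Matrix.linftyOpNormedAlgebra
  letI : NormedRing (Matrix (Fin n) (Fin n) ℂ) := Matrix.linftyOpNormedRing
  letI : NormedAlgebra ℂ (Matrix (Fin n) (Fin n) ℂ) := Matrix.linftyOpNormedAlgebra
  letI : NormedAddCommGroup (Matrix (Fin m) (Fin n) ℂ) := Matrix.linftyOpNormedAddCommGroup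
  letI : NormedSpace ℂ (Matrix (Fin m) (Fin n) ℂ) := Matrix.linftyOpNormedSpace
  letI : AddCommGroup (MatN m n) := inferInstanceAs (AddCommGroup (Matrix (Fin m) (Fin n) ℂ))
  letI : Module ℂ (MatN m n) := inferInstanceAs (Module ℂ (Matrix (Fin m) (Fin n) ℂ))
  letI : NormedAddCommGroup (MatN m n) := AddGroupNorm.toNormedAddCommGroup
    { toFun := fun X => N X
      map_zero' := N_zero hN
      add_le' := hN.triangle
      neg' := N_neg hN
      eq_zero_of_map_eq_zero' := fun X h => (hN.eq_zero_iff X).mp h }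
  letI : NormedSpace ℂ (MatN m n) := ⟨fun c x => le_of_eq (hN.smul c x)⟩
  -- the identity, as a continuous linear map into the `N`-normed synonym
  let l : Matrix (Fin m) (Fin n) ℂ →ₗ[ℂ] MatN m n :=
    { toFun := fun X => X, map_add' := fun _ _ => rfl, map_smul' := fun _ _ => rfl }
  let e : Matrix (Fin m) (Fin n) ℂ →L[ℂ] MatN m n := LinearMap.toContinuousLinearMap l
  set Fm : ℂ → Matrix (Fin m) (Fin n) ℂ :=
    fun z => mexp (z • H) * A * mexp ((-z) • K) with hFm
  let f : ℂ → MatN m n := fun z => e (Fm z)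
  -- differentiability
  have hexpH : Differentiable ℂ fun z : ℂ => mexp (z • H) := by
    intro z
    exact (hasDerivAt_exp_smul_const (𝕂 := ℂ) H z).differentiableAt
  have hexpK : Differentiable ℂ fun z : ℂ => mexp ((-z) • K) := by
    have h : Differentiable ℂ fun u : ℂ => mexp (u • K) := fun u =>
      (hasDerivAt_exp_smul_const (𝕂 := ℂ) K u).differentiableAt
    exact h.comp differentiable_neg
  let rA : Matrix (Fin m) (Fin m) ℂ →ₗ[ℂ] Matrix (Fin m) (Fin n) ℂ :=
    { toFun := fun X => X * A
      map_add' := fun X Y => Matrix.add_mul X Y A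
      map_smul' := fun c X => Matrix.smul_mul c X A }
  let mulLin : Matrix (Fin m) (Fin n) ℂ →ₗ[ℂ] Matrix (Fin n) (Fin n) ℂ →L[ℂ]
      Matrix (Fin m) (Fin n) ℂ :=
    { toFun := fun X => LinearMap.toContinuousLinearMap
        { toFun := fun Y => X * Y
          map_add' := fun Y Z => Matrix.mul_add X Y Z
          map_smul' := fun c Y => Matrix.mul_smul X c Y }
      map_add' := by
        intro X Y
        apply ContinuousLinearMap.ext
        intro Z
        simp [Matrix.add_mul]
      map_smul' := by
        intro c X
        apply ContinuousLinearMap.ext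
        intro Z
        simp [Matrix.smul_mul] }
  have hdiff : Differentiable ℂ f := by
    have h1 : Differentiable ℂ fun z : ℂ => (LinearMap.toContinuousLinearMap rA) (mexp (z • H)) :=
      (LinearMap.toContinuousLinearMap rA).differentiable.comp hexpH
    have h2 : Differentiable ℂ (⇑(LinearMap.toContinuousLinearMap mulLin) ∘
        fun z : ℂ => (LinearMap.toContinuousLinearMap rA) (mexp (z • H))) :=
      @Differentiable.comp ℂ _ ℂ _ _ _ _ _ (Matrix (Fin n) (Fin n) ℂ →L[ℂ] Matrix (Fin m) (Fin n) ℂ)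
        ContinuousLinearMap.toNormedAddCommGroup ContinuousLinearMap.toNormedSpace _ _
        (LinearMap.toContinuousLinearMap mulLin).differentiable h1
    have h2' : Differentiable ℂ fun z : ℂ =>
        (LinearMap.toContinuousLinearMap mulLin) ((LinearMap.toContinuousLinearMap rA)
          (mexp (z • H))) := h2
    have h3 : Differentiable ℂ fun z : ℂ =>
        ((LinearMap.toContinuousLinearMap mulLin) ((LinearMap.toContinuousLinearMap rA)
          (mexp (z • H)))) (mexp ((-z) • K)) := h2'.clm_apply hexpK
    have h4 : Differentiable ℂ (⇑e ∘ fun z : ℂ =>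
        ((LinearMap.toContinuousLinearMap mulLin) ((LinearMap.toContinuousLinearMap rA)
          (mexp (z • H)))) (mexp ((-z) • K))) := e.differentiable.comp h3
    exact h4
  have hnormf : ∀ z : ℂ, ‖f z‖ = N (Fm z) := fun z => rfl
  have hline : ∀ z : ℂ, ‖f z‖ = N (Fm ((z.re : ℂ))) := by
    intro z
    rw [hnormf]
    exact norm_line_invariant hN hH hK A z
  have hd : DiffContOnCl ℂ f (Complex.HadamardThreeLines.verticalStrip 0 1) :=
    hdiff.diffContOnCl
  have hB : BddAbove ((norm ∘ f) '' Complex.HadamardThreeLines.verticalClosedStrip 0 1) := by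
    have hc : Continuous fun x : ℝ => ‖f ((x : ℂ))‖ :=
      (hdiff.continuous.comp Complex.continuous_ofReal).norm
    refine BddAbove.mono ?_ (((isCompact_Icc (a := (0:ℝ)) (b := 1)).image hc).bddAbove)
    rintro - ⟨z, hz, rfl⟩
    refine ⟨z.re, hz, ?_⟩
    show ‖f ((z.re : ℝ) : ℂ)‖ = (norm ∘ f) z
    simp only [Function.comp_apply]
    rw [hline z, hline ((z.re : ℂ))]
    simp
  have ha : ∀ w ∈ Complex.re ⁻¹' {0}, ‖f w‖ ≤ N A := by
    intro w hw
    rw [Set.mem_preimage, Set.mem_singleton_iff] at hw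
    rw [hline w, hw]
    have : Fm ((0 : ℝ) : ℂ) = A := by
      simp only [hFm, Complex.ofReal_zero, neg_zero, mexp_zero, Matrix.one_mul, Matrix.mul_one]
    rw [show ((0:ℝ) : ℂ) = ((0:ℂ)) by norm_num] at this ⊢
    rw [this]
  have hb : ∀ w ∈ Complex.re ⁻¹' {1}, ‖f w‖ ≤
      N (mexp ((1 : ℂ) • H) * A * mexp ((-(1 : ℂ)) • K)) := by
    intro w hw
    rw [Set.mem_preimage, Set.mem_singleton_iff] at hw
    rw [hline w, hw]
    simp only [hFm, Complex.ofReal_one]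
    exact le_rfl
  have hz : (x : ℂ) ∈ Complex.HadamardThreeLines.verticalClosedStrip 0 1 := by
    simpa [Complex.HadamardThreeLines.verticalClosedStrip] using hx
  have hmain := Complex.HadamardThreeLines.norm_le_interp_of_mem_verticalClosedStrip'
    (f := f) zero_lt_one hz hd hB ha hb
  rw [hnormf] at hmain
  simpa [hFm, Complex.ofReal_re] using hmain

/-- General three-point interpolation inequality. -/
lemma keyInterp (hN : IsUnitarilyInvariantNorm m n N)
    {H : Matrix (Fin m) (Fin m) ℂ} {K : Matrix (Fin n) (Fin n) ℂ}
    (hH : H.IsHermitian) (hK : K.IsHermitian) (A : Matrix (Fin m) (Fin n) ℂ)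
    (s t : ℝ) {lam : ℝ} (hlam : lam ∈ Set.Icc (0 : ℝ) 1) :
    N (mexp ((((1 - lam) * s + lam * t : ℝ) : ℂ) • H) * A *
        mexp ((-(((1 - lam) * s + lam * t : ℝ) : ℂ)) • K)) ≤
      N (mexp ((s : ℂ) • H) * A * mexp ((-(s : ℂ)) • K)) ^ (1 - lam) *
        N (mexp ((t : ℂ) • H) * A * mexp ((-(t : ℂ)) • K)) ^ lam := by
  have hH' : (((t - s : ℝ) : ℂ) • H).IsHermitian := by
    show (((t - s : ℝ) : ℂ) • H)ᴴ = _
    rw [Matrix.conjTranspose_smul, hH.eq]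
    congr 1
    simp [Complex.star_def, Complex.conj_ofReal]
  have hK' : (((t - s : ℝ) : ℂ) • K).IsHermitian := by
    show (((t - s : ℝ) : ℂ) • K)ᴴ = _
    rw [Matrix.conjTranspose_smul, hK.eq]
    congr 1
    simp [Complex.star_def, Complex.conj_ofReal]
  set A' := mexp ((s : ℂ) • H) * A * mexp ((-(s : ℂ)) • K) with hA'
  have hkey : ∀ u : ℝ,
      mexp ((u : ℂ) • (((t - s : ℝ) : ℂ) • H)) * A' *
        mexp ((-(u : ℂ)) • (((t - s : ℝ) : ℂ) • K)) =
      mexp (((s + u * (t - s) : ℝ) : ℂ) • H) * A *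
        mexp ((-((s + u * (t - s) : ℝ) : ℂ)) • K) := by
    intro u
    have h1 : (u : ℂ) • (((t - s : ℝ) : ℂ) • H) = (((u * (t - s) : ℝ) : ℂ)) • H := by
      rw [smul_smul]; push_cast; ring_nf
    have h2 : (-(u : ℂ)) • (((t - s : ℝ) : ℂ) • K) = (-(((u * (t - s) : ℝ) : ℂ))) • K := by
      rw [smul_smul]; push_cast; ring_nf
    rw [h1, h2, hA']
    have := conj_shift H K A ((s : ℝ) : ℂ) (((u * (t - s) : ℝ) : ℂ))
    rw [this]
    congr 2 <;> push_cast <;> ring_nf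
  have h := key01 hN hH' hK' A' (x := lam) hlam
  rw [hkey lam] at h
  have h0 : mexp ((1 : ℂ) • (((t - s : ℝ) : ℂ) • H)) * A' *
      mexp ((-(1 : ℂ)) • (((t - s : ℝ) : ℂ) • K)) =
      mexp (((s + 1 * (t - s) : ℝ) : ℂ) • H) * A *
        mexp ((-((s + 1 * (t - s) : ℝ) : ℂ)) • K) := by
    have := hkey 1
    rw [show (((1:ℝ)) : ℂ) = (1 : ℂ) by norm_num] at this
    exact this
  rw [h0] at h
  have e1 : s + lam * (t - s) = (1 - lam) * s + lam * t := by ring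
  have e2 : s + 1 * (t - s) = t := by ring
  rw [e1, e2] at h
  exact h

/-- The single-term log-convexity lemma. -/
lemma logN_convexOn (hN : IsUnitarilyInvariantNorm m n N)
    (A : Matrix (Fin m) (Fin n) ℂ) (hA : A ≠ 0)
    {H : Matrix (Fin m) (Fin m) ℂ} {K : Matrix (Fin n) (Fin n) ℂ}
    (hH : H.IsHermitian) (hK : K.IsHermitian) :
    ConvexOn ℝ Set.univ (fun t : ℝ =>
      Real.log (N (mexp ((t : ℂ) • H) * A * mexp ((-t : ℂ) • K)))) := by
  have hGne : ∀ u : ℝ, mexp ((u : ℂ) • H) * A * mexp ((-(u : ℂ)) • K) ≠ 0 := by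
    intro u hzero
    apply hA
    have h := conj_shift H K A ((u : ℝ) : ℂ) (-((u : ℝ) : ℂ))
    rw [add_neg_cancel, mexp_zero, neg_zero, mexp_zero, Matrix.one_mul, Matrix.mul_one,
      neg_neg] at h
    rw [← h, hzero, Matrix.mul_zero, Matrix.zero_mul]
  have hpos : ∀ u : ℝ, 0 < N (mexp ((u : ℂ) • H) * A * mexp ((-(u : ℂ)) • K)) :=
    fun u => N_pos hN (hGne u)
  refine ⟨convex_univ, ?_⟩
  intro p _ q _ a b ha hb hab
  have hb1 : b ∈ Set.Icc (0 : ℝ) 1 := ⟨hb, by linarith⟩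
  have hkey := keyInterp hN hH hK A p q hb1
  have ha' : a = 1 - b := by linarith
  simp only [smul_eq_mul]
  rw [ha']
  calc Real.log (N (mexp (((((1 - b) * p + b * q : ℝ)) : ℂ) • H) * A *
          mexp ((-(((1 - b) * p + b * q : ℝ) : ℂ)) • K)))
      ≤ Real.log (N (mexp ((p : ℂ) • H) * A * mexp ((-(p : ℂ)) • K)) ^ (1 - b) *
          N (mexp ((q : ℂ) • H) * A * mexp ((-(q : ℂ)) • K)) ^ b) := by
        exact Real.log_le_log (hpos _) hkey
    _ = (1 - b) * Real.log (N (mexp ((p : ℂ) • H) * A * mexp ((-(p : ℂ)) • K))) +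
          b * Real.log (N (mexp ((q : ℂ) • H) * A * mexp ((-(q : ℂ)) • K))) := by
        rw [Real.log_mul (ne_of_gt (Real.rpow_pos_of_pos (hpos p) _))
          (ne_of_gt (Real.rpow_pos_of_pos (hpos q) _)),
          Real.log_rpow (hpos p), Real.log_rpow (hpos q)]

end LogCCN

/-- The log of the cross condition number,
`t ↦ log ‖e^{tH₁} A e^{-tH₂}‖₁ + log ‖e^{tH₂} B e^{-tH₁}‖₂`, is convex on `ℝ`. -/
theorem logCrossConditionNumber_convex (m n : ℕ)
    (A : Matrix (Fin m) (Fin n) ℂ) (B : Matrix (Fin n) (Fin m) ℂ)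
    (hA : A ≠ 0) (hB : B ≠ 0)
    (N₁ : Matrix (Fin m) (Fin n) ℂ → ℝ) (N₂ : Matrix (Fin n) (Fin m) ℂ → ℝ)
    (hN₁ : IsUnitarilyInvariantNorm m n N₁) (hN₂ : IsUnitarilyInvariantNorm n m N₂)
    (H₁ : Matrix (Fin m) (Fin m) ℂ) (H₂ : Matrix (Fin n) (Fin n) ℂ)
    (hH₁ : H₁.IsHermitian) (hH₂ : H₂.IsHermitian) :
    ConvexOn ℝ Set.univ (fun t : ℝ =>
      Real.log (N₁ (mexp ((t : ℂ) • H₁) * A * mexp ((-t : ℂ) • H₂))) +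
      Real.log (N₂ (mexp ((t : ℂ) • H₂) * B * mexp ((-t : ℂ) • H₁)))) := by
  exact (LogCCN.logN_convexOn hN₁ A hA hH₁ hH₂).add (LogCCN.logN_convexOn hN₂ B hB hH₂ hH₁)
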